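/- Let k be a field, R a finitely generated k-algebra which is an integral domain of Krull dimension 1, M a finitely generated torsion-free R-module, and m ∈ M. Then the set D(m) = { p ∈ Spec R : the image of m under the natural map M → M ⊗_R κ(p) is nonzero } is an open subset of the prime spectrum Spec R with its Zariski topology. -/

import Mathlib

/-- The residue field `κ(p)` of a prime `p`, i.e. the residue field of the localization at `p`. -/
noncomputable abbrev residueFieldAt {R : Type*} [CommRing R] (p : PrimeSpectrum R) : Type _ :=
  IsLocalRing.ResidueField (Localization.AtPrime p.asIdeal)

/-- On a torsion-free finite module over a domain, any nonzero element admits a linear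
functional not vanishing on it. -/
theorem exists_functional_ne_zero {R : Type*} [CommRing R] [IsDomain R]
    {M : Type*} [AddCommGroup M] [Module R M] [Module.Finite R M] [NoZeroSMulDivisors R M]
    {m : M} (hm : m ≠ 0) : ∃ h : M →ₗ[R] R, h m ≠ 0 := by
  classical
  let K := FractionRing R
  let V := LocalizedModule (nonZeroDivisors R) M
  let ℓ : M →ₗ[R] V := LocalizedModule.mkLinearMap (nonZeroDivisors R) M
  have hx : ℓ m ≠ 0 := by
    rw [Ne, IsLocalizedModule.eq_zero_iff (nonZeroDivisors R) ℓ]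
    rintro ⟨s, hs⟩
    rcases smul_eq_zero.mp hs with h | h
    · exact nonZeroDivisors.coe_ne_zero s h
    · exact hm h
  obtain ⟨φ, hφ⟩ : ∃ φ : Module.Dual K V, φ (ℓ m) ≠ 0 := by
    by_contra h
    push_neg at h
    exact hx ((Module.forall_dual_apply_eq_zero_iff K _).mp h)
  let g : M →ₗ[R] K := (φ.restrictScalars R).comp ℓ
  obtain ⟨s, hs⟩ := Module.Finite.fg_top (R := R) (M := M)
  obtain ⟨b, hb⟩ := IsLocalization.exist_integer_multiples (nonZeroDivisors R) s g
  have hall : ∀ y : M, IsLocalization.IsInteger R ((b : R) • g y) := by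
    intro y
    have hy : y ∈ Submodule.span R (s : Set M) := hs ▸ Submodule.mem_top
    have : y ∈ Submodule.comap ((b : R) • g) (LinearMap.range (Algebra.linearMap R K)) := by
      refine Submodule.span_le.mpr ?_ hy
      intro z hz
      obtain ⟨r, hr⟩ := hb z hz
      exact ⟨r, by simpa using hr⟩
    obtain ⟨r, hr⟩ := this
    exact ⟨r, by simpa using hr⟩
  choose ch hch using hall
  let h : M →ₗ[R] R :=
    { toFun := ch
      map_add' := by
        intro x y
        apply IsFractionRing.injective R K
        simp [hch, smul_add]
      map_smul' := by
        intro r x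
        apply IsFractionRing.injective R K
        rw [hch, map_smul, smul_comm, ← hch x]
        simp [Algebra.smul_def] }
  refine ⟨h, fun h0 => ?_⟩
  have h1 : (b : R) • g m = 0 := by
    rw [← hch m, show ch m = h m from rfl, h0, map_zero]
  rw [Algebra.smul_def, mul_eq_zero] at h1
  rcases h1 with h1 | h1
  · exact nonZeroDivisors.coe_ne_zero b (IsFractionRing.injective R K (by rw [h1, map_zero]))
  · exact hφ (by simpa [g] using h1)

open TensorProduct in
theorem tmul_residue_ne_zero_of_functional {R : Type*} [CommRing R]
    {M : Type*} [AddCommGroup M] [Module R M]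
    (m : M) (h : M →ₗ[R] R) (p : PrimeSpectrum R) (hp : h m ∉ p.asIdeal) :
    (m ⊗ₜ[R] (1 : residueFieldAt p) : M ⊗[R] residueFieldAt p) ≠ 0 := by
  intro h0
  set κ := residueFieldAt p
  let ψ : M ⊗[R] κ →ₗ[R] κ := (TensorProduct.lid R κ).toLinearMap.comp (h.rTensor κ)
  have key : ψ (m ⊗ₜ[R] (1 : κ)) = algebraMap R κ (h m) := by
    simp [ψ, Algebra.algebraMap_eq_smul_one]
  rw [h0, map_zero] at key
  have hunit : IsUnit (algebraMap R (Localization.AtPrime p.asIdeal) (h m)) :=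
    (IsLocalization.AtPrime.isUnit_to_map_iff _ p.asIdeal _).mpr hp
  have : IsUnit (algebraMap R κ (h m)) := by
    rw [IsScalarTower.algebraMap_apply R (Localization.AtPrime p.asIdeal) κ]
    exact hunit.map (IsLocalRing.residue _)
  exact this.ne_zero key.symm

open TensorProduct in
/-- Let `k` be a field, `R` a finitely generated `k`-algebra which is a domain of Krull
dimension one, `M` a finitely generated torsion-free `R`-module, and `m ∈ M`. Then the
nonvanishing locus `D(m) = { p ∈ Spec R | the image of m in M ⊗_R κ(p) is nonzero }` is an
open subset of `Spec R`. -/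
theorem stmt_5 (k : Type*) [Field k]
    (R : Type*) [CommRing R] [IsDomain R] [Algebra k R] [Algebra.FiniteType k R]
    (hdim : ringKrullDim R = 1)
    (M : Type*) [AddCommGroup M] [Module R M] [Module.Finite R M] [NoZeroSMulDivisors R M]
    (m : M) :
    IsOpen { p : PrimeSpectrum R |
      (m ⊗ₜ[R] (1 : residueFieldAt p) : M ⊗[R] residueFieldAt p) ≠ 0 } := by
  classical
  rcases eq_or_ne m 0 with rfl | hm
  · convert isOpen_empty with p
    simp
  have hNoeth : IsNoetherianRing R := Algebra.FiniteType.isNoetherianRing k R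
  -- dimension ≤ 1 : every nonzero prime is maximal
  have hD1 : ∀ P : Ideal R, P ≠ ⊥ → P.IsPrime → P.IsMaximal := by
    intro P hP hPp
    by_contra hmax
    obtain ⟨Q, hQ, hPQ⟩ := P.exists_le_maximal hPp.ne_top
    have hPQne : P ≠ Q := fun h => hmax (h ▸ hQ)
    have hbot : (⊥ : Ideal R).IsPrime := Ideal.bot_prime
    let c : LTSeries (PrimeSpectrum R) :=
      ⟨2, ![⟨⊥, hbot⟩, ⟨P, hPp⟩, ⟨Q, hQ.isPrime⟩], by
        intro i
        fin_cases i
        · exact lt_of_le_of_ne bot_le (fun h => hP (congrArg PrimeSpectrum.asIdeal h).symm)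
        · exact lt_of_le_of_ne hPQ (fun h => hPQne h)⟩
    have h2 := Order.LTSeries.length_le_krullDim c
    rw [show Order.krullDim (PrimeSpectrum R) = ringKrullDim R from rfl, hdim] at h2
    norm_num [c] at h2
  obtain ⟨h, hfm⟩ := exists_functional_ne_zero (R := R) hm
  set f := h m with hf
  set D := { p : PrimeSpectrum R |
      (m ⊗ₜ[R] (1 : residueFieldAt p) : M ⊗[R] residueFieldAt p) ≠ 0 } with hD
  rw [← isClosed_compl_iff]
  -- the complement is contained in the primes containing f
  have hsub : Dᶜ ⊆ { p : PrimeSpectrum R | f ∈ p.asIdeal } := by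
    intro p hp
    by_contra hfp
    exact hp (tmul_residue_ne_zero_of_functional m h p hfp)
  -- every element of the complement is a minimal prime over (f)
  have hmem : ∀ p ∈ Dᶜ, p.asIdeal ∈ (Ideal.span {f}).minimalPrimes := by
    intro p hp
    refine ⟨⟨p.2, (Ideal.span_singleton_le_iff_mem _).mpr (hsub hp)⟩, ?_⟩
    rintro q ⟨hqp, hqf⟩ hqle
    have hfq : f ∈ q := (Ideal.span_singleton_le_iff_mem _).mp hqf
    have hqbot : q ≠ ⊥ := fun hqb => hfm (by simpa [hqb] using hfq)
    exact ((hD1 q hqbot hqp).eq_of_le p.2.ne_top hqle).ge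
  -- hence the complement is finite
  have hminfin : ((Ideal.span {f}).minimalPrimes).Finite := by
    rw [Ideal.minimalPrimes_eq_comap]
    exact (minimalPrimes.finite_of_isNoetherianRing (R ⧸ Ideal.span {f})).image _
  have hinj : Function.Injective (PrimeSpectrum.asIdeal (R := R)) := @PrimeSpectrum.ext _ _
  have hfin : (Dᶜ).Finite := by
    refine Set.Finite.subset (hminfin.preimage hinj.injOn) ?_
    intro p hp
    exact hmem p hp
  -- a finite set of closed points is closed
  have : Dᶜ = ⋃ p ∈ Dᶜ, {p} := (Set.biUnion_of_singleton _).symm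
  rw [this]
  refine hfin.isClosed_biUnion ?_
  intro p hp
  rw [PrimeSpectrum.isClosed_singleton_iff_isMaximal]
  have hpbot : p.asIdeal ≠ ⊥ := by
    intro hb
    exact hfm (by simpa [hb] using hsub hp)
  exact hD1 p.asIdeal hpbot p.2
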